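/- arXiv:1809.09573 — 2 statements merged into one kernel-verified Lean document; each statement's English description precedes it below -/
import Mathlib

section
/- For any matrices U, X ∈ ℝⁿˣʳ with σ_r(X) > 0 (i.e., X has full column rank), one has dist²(U, X) ≤ ‖U·Uᵀ − X·Xᵀ‖_F² / (2·(√2 − 1)·σ_r(X)²), where dist(U, X) = min over orthonormal H ∈ O^{r×r} of ‖UH − X‖_F and σ_r(X) is the r-th largest singular value of X. -/
open Matrix

/-- The Frobenius norm of a real matrix. -/
noncomputable def frobNorm {p q : ℕ} (A : Matrix (Fin p) (Fin q) ℝ) : ℝ :=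
  Real.sqrt (∑ i, ∑ j, (A i j) ^ 2)

theorem Matrix.isHermitian_transpose_mul_self {p q : ℕ} (M : Matrix (Fin p) (Fin q) ℝ) :
    (Mᵀ * M).IsHermitian := by
  simpa [Matrix.conjTranspose_eq_transpose_of_trivial] using Matrix.isHermitian_conjTranspose_mul_self M

/-- The `i`-th largest singular value of a real matrix (0-indexed: `sval M 0` is the largest),
defined as the square root of the `i`-th largest eigenvalue of `MᴴM`. -/
noncomputable def sval {p q : ℕ} (M : Matrix (Fin p) (Fin q) ℝ) (i : Fin q) : ℝ :=
  Real.sqrt ((Matrix.isHermitian_transpose_mul_self M).eigenvalues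
    (Tuple.sort (Matrix.isHermitian_transpose_mul_self M).eigenvalues i.rev))

/-- `dist(U, X) = min_{H ∈ O^{r×r}} ‖UH − X‖_F`. -/
noncomputable def distF {n r : ℕ} (U X : Matrix (Fin n) (Fin r) ℝ) : ℝ :=
  sInf ((fun H => frobNorm (U * H - X)) '' {H : Matrix (Fin r) (Fin r) ℝ | Hᵀ * H = 1})

namespace DistProof

variable {r : ℕ}

lemma vecMulVec_mul_vecMulVec (a b c d : Fin r → ℝ) :
    vecMulVec a b * vecMulVec c d = (b ⬝ᵥ c) • vecMulVec a d := by
  ext i j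
  simp only [mul_apply, vecMulVec_apply, Matrix.smul_apply, dotProduct, smul_eq_mul,
    Finset.sum_mul]
  exact Finset.sum_congr rfl fun k _ => by ring

lemma trace_vecMulVec_mul (a b : Fin r → ℝ) (W : Matrix (Fin r) (Fin r) ℝ) :
    trace (vecMulVec a b * W) = b ⬝ᵥ (W *ᵥ a) := by
  simp only [trace, diag_apply, mul_apply, vecMulVec_apply, dotProduct, mulVec,
    Finset.mul_sum]
  rw [Finset.sum_comm]
  exact Finset.sum_congr rfl fun k _ => Finset.sum_congr rfl fun i _ => by ring

lemma transpose_vecMulVec (a b : Fin r → ℝ) : (vecMulVec a b)ᵀ = vecMulVec b a := by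
  ext i j
  simp only [transpose_apply, vecMulVec_apply]
  ring

lemma refl_orth (G : Matrix (Fin r) (Fin r) ℝ) (hGt : Gᵀ = G) (hGG : G * G = G) :
    ((1 : Matrix (Fin r) (Fin r) ℝ) - (2:ℝ) • G)ᵀ * (1 - (2:ℝ) • G) = 1 := by
  rw [transpose_sub, transpose_one, transpose_smul, hGt]
  simp only [Matrix.sub_mul, Matrix.mul_sub, Matrix.smul_mul, Matrix.mul_smul,
    Matrix.one_mul, Matrix.mul_one, smul_smul, smul_sub, hGG]
  match_scalars <;> ring

lemma rot_orth (G J : Matrix (Fin r) (Fin r) ℝ) (hGt : Gᵀ = G) (hJt : Jᵀ = -J)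
    (hGG : G * G = G) (hGJ : G * J = J) (hJG : J * G = J) (hJJ : J * J = -G) (a s : ℝ)
    (hpy : a * a + s * s + 2 * a = 0) :
    ((1 : Matrix (Fin r) (Fin r) ℝ) + a • G + s • J)ᵀ * (1 + a • G + s • J) = 1 := by
  rw [transpose_add, transpose_add, transpose_one, transpose_smul, transpose_smul, hGt, hJt]
  simp only [Matrix.add_mul, Matrix.mul_add, Matrix.smul_mul, Matrix.mul_smul,
    Matrix.one_mul, Matrix.mul_one, Matrix.neg_mul, Matrix.mul_neg, smul_neg, neg_smul,
    neg_neg, hGG, hGJ, hJG, hJJ, smul_smul, smul_add, smul_sub]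
  match_scalars
  · ring
  · linear_combination hpy
  · ring

lemma psd_of_max (W : Matrix (Fin r) (Fin r) ℝ)
    (h : ∀ R : Matrix (Fin r) (Fin r) ℝ, Rᵀ * R = 1 → trace (Rᵀ * W) ≤ trace W) :
    ∀ u : Fin r → ℝ, 0 ≤ u ⬝ᵥ W *ᵥ u := by
  have hunit : ∀ u : Fin r → ℝ, u ⬝ᵥ u = 1 → 0 ≤ u ⬝ᵥ W *ᵥ u := by
    intro u hu
    have hGt : (vecMulVec u u)ᵀ = vecMulVec u u := transpose_vecMulVec u u
    have hGG : vecMulVec u u * vecMulVec u u = vecMulVec u u := by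
      rw [vecMulVec_mul_vecMulVec, hu, one_smul]
    have h2 := h _ (refl_orth (vecMulVec u u) hGt hGG)
    rw [transpose_sub, transpose_one, transpose_smul, hGt, Matrix.sub_mul, Matrix.one_mul,
      trace_sub, Matrix.smul_mul, trace_smul, trace_vecMulVec_mul] at h2
    simp only [smul_eq_mul] at h2
    linarith
  intro u
  rcases eq_or_ne (u ⬝ᵥ u) 0 with h0 | h0
  · have hu0 : u = 0 := by
      funext k
      have h1 : ∑ i, u i * u i = 0 := h0
      have h2 : ∀ i ∈ Finset.univ, (0:ℝ) ≤ u i * u i := fun i _ => mul_self_nonneg _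
      have h3 := (Finset.sum_eq_zero_iff_of_nonneg h2).mp h1 k (Finset.mem_univ k)
      exact mul_self_eq_zero.mp h3
    simp [hu0]
  · have hpos : 0 < u ⬝ᵥ u := by
      rcases lt_or_eq_of_le (Finset.sum_nonneg (fun i (_ : i ∈ Finset.univ) =>
        mul_self_nonneg (u i))) with h1 | h1
      · exact h1
      · exact absurd h1.symm h0
    obtain ⟨t, htpos, ht2⟩ : ∃ t : ℝ, 0 < t ∧ t * t = u ⬝ᵥ u :=
      ⟨Real.sqrt _, Real.sqrt_pos.mpr hpos, Real.mul_self_sqrt hpos.le⟩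
    have ht' : t * t⁻¹ = 1 := mul_inv_cancel₀ htpos.ne'
    have hv : (t⁻¹ • u) ⬝ᵥ (t⁻¹ • u) = 1 := by
      rw [smul_dotProduct, dotProduct_smul, smul_eq_mul, smul_eq_mul, ← ht2]
      calc t⁻¹ * (t⁻¹ * (t * t)) = (t * t⁻¹) * (t * t⁻¹) := by ring
        _ = 1 := by rw [ht']; ring
    have h4 := hunit _ hv
    rw [smul_dotProduct, mulVec_smul, dotProduct_smul, smul_eq_mul, smul_eq_mul] at h4
    have h5 : (t * t) * (t⁻¹ * (t⁻¹ * (u ⬝ᵥ W *ᵥ u))) = u ⬝ᵥ W *ᵥ u := by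
      calc (t * t) * (t⁻¹ * (t⁻¹ * (u ⬝ᵥ W *ᵥ u)))
          = (t * t⁻¹) * ((t * t⁻¹) * (u ⬝ᵥ W *ᵥ u)) := by ring
        _ = u ⬝ᵥ W *ᵥ u := by rw [ht']; ring
    have h6 := mul_nonneg (mul_pos htpos htpos).le h4
    linarith [h5, h6]

lemma symm_of_max (W : Matrix (Fin r) (Fin r) ℝ)
    (h : ∀ R : Matrix (Fin r) (Fin r) ℝ, Rᵀ * R = 1 → trace (Rᵀ * W) ≤ trace W) :
    Wᵀ = W := by
  ext i j
  rcases eq_or_ne i j with rfl | hij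
  · rfl
  set ei : Fin r → ℝ := Pi.single i 1 with hei
  set ej : Fin r → ℝ := Pi.single j 1 with hej
  have dii : ei ⬝ᵥ ei = 1 := by simp [hei, single_dotProduct]
  have djj : ej ⬝ᵥ ej = 1 := by simp [hej, single_dotProduct]
  have dij : ei ⬝ᵥ ej = 0 := by
    simp [hei, hej, single_dotProduct, Pi.single_apply, hij]
  have dji : ej ⬝ᵥ ei = 0 := by
    simp [hei, hej, single_dotProduct, Pi.single_apply, (Ne.symm hij)]
  set G := vecMulVec ei ei + vecMulVec ej ej with hG
  set J := vecMulVec ej ei - vecMulVec ei ej with hJ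
  have hGt : Gᵀ = G := by
    rw [hG, transpose_add, transpose_vecMulVec, transpose_vecMulVec]
  have hJt : Jᵀ = -J := by
    rw [hJ, transpose_sub, transpose_vecMulVec, transpose_vecMulVec]
    abel
  have hGG : G * G = G := by
    rw [hG, Matrix.add_mul, Matrix.mul_add, Matrix.mul_add]
    simp only [vecMulVec_mul_vecMulVec, dii, djj, dij, dji, one_smul, zero_smul]
    abel
  have hGJ : G * J = J := by
    rw [hG, hJ, Matrix.add_mul, Matrix.mul_sub, Matrix.mul_sub]
    simp only [vecMulVec_mul_vecMulVec, dii, djj, dij, dji, one_smul, zero_smul]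
    abel
  have hJG : J * G = J := by
    rw [hG, hJ, Matrix.sub_mul, Matrix.mul_add, Matrix.mul_add]
    simp only [vecMulVec_mul_vecMulVec, dii, djj, dij, dji, one_smul, zero_smul]
    abel
  have hJJ : J * J = -G := by
    rw [hG, hJ, Matrix.sub_mul, Matrix.mul_sub, Matrix.mul_sub]
    simp only [vecMulVec_mul_vecMulVec, dii, djj, dij, dji, one_smul, zero_smul]
    abel
  have hGW : trace (G * W) = W i i + W j j := by
    rw [hG, Matrix.add_mul, trace_add, trace_vecMulVec_mul, trace_vecMulVec_mul]
    simp [hei, hej, mulVec_single, single_dotProduct]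
  have hJW : trace (J * W) = W i j - W j i := by
    rw [hJ, Matrix.sub_mul, trace_sub, trace_vecMulVec_mul, trace_vecMulVec_mul]
    simp [hei, hej, mulVec_single, single_dotProduct]
  have hcond : ∀ θ : ℝ, Real.cos θ * (W i i + W j j) + Real.sin θ * (W j i - W i j)
      ≤ W i i + W j j := by
    intro θ
    have hpy : (Real.cos θ - 1) * (Real.cos θ - 1) + Real.sin θ * Real.sin θ
        + 2 * (Real.cos θ - 1) = 0 := by
      nlinarith [Real.sin_sq_add_cos_sq θ]
    have h2 := h _ (rot_orth G J hGt hJt hGG hGJ hJG hJJ (Real.cos θ - 1) (Real.sin θ) hpy)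
    rw [transpose_add, transpose_add, transpose_one, transpose_smul, transpose_smul, hGt,
      hJt] at h2
    rw [Matrix.add_mul, Matrix.add_mul, Matrix.one_mul] at h2
    rw [Matrix.smul_mul, Matrix.smul_mul, Matrix.neg_mul] at h2
    rw [trace_add, trace_add, trace_smul, trace_smul, trace_neg, hGW, hJW] at h2
    simp only [smul_eq_mul] at h2
    linarith
  show W j i = W i j
  by_contra hne
  set b := W i i + W j j with hb
  set e := W j i - W i j with heq
  have he : e ≠ 0 := by
    intro hc
    rw [heq] at hc
    exact hne (by linarith)
  set z : ℂ := ⟨b, e⟩ with hz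
  have hzre : z.re = b := rfl
  have hzim : z.im = e := rfl
  have hz0 : z ≠ 0 := by
    intro hc
    apply he
    have := congrArg Complex.im hc
    simpa [hzim] using this
  have hρ : 0 < ‖z‖ := norm_pos_iff.mpr hz0
  have h6 := hcond z.arg
  rw [Complex.cos_arg hz0, Complex.sin_arg, hzre, hzim] at h6
  have h7 : (b * b + e * e) / ‖z‖ ≤ b := by
    have h7' : b / ‖z‖ * b + e / ‖z‖ * e
        = (b * b + e * e) / ‖z‖ := by ring
    linarith [h7' ▸ h6]
  have h8 : b * b + e * e ≤ b * ‖z‖ := (div_le_iff₀ hρ).mp h7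
  have h9 : ‖z‖ * ‖z‖ = b * b + e * e := by
    have h9' := Complex.sq_norm z
    have h10 : Complex.normSq z = b * b + e * e := by
      rw [Complex.normSq_apply, hzre, hzim]
    nlinarith [h9', h10]
  have he2 : 0 < e * e := by
    rcases (mul_self_nonneg e).lt_or_eq with h' | h'
    · exact h'
    · exact absurd (mul_self_eq_zero.mp h'.symm) he
  nlinarith [h8, h9, he2, hρ, mul_self_nonneg (b - ‖z‖)]



variable {r : ℕ}

lemma exists_best (r : ℕ) (M : Matrix (Fin r) (Fin r) ℝ) :
    ∃ Q : Matrix (Fin r) (Fin r) ℝ, Qᵀ * Q = 1 ∧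
      ∀ R : Matrix (Fin r) (Fin r) ℝ, Rᵀ * R = 1 →
        trace (Rᵀ * (Qᵀ * M)) ≤ trace (Qᵀ * M) := by
  classical
  set K : Set (Matrix (Fin r) (Fin r) ℝ) := {H | Hᵀ * H = 1} with hK
  have hclosed : IsClosed K :=
    isClosed_eq (continuous_id.matrix_transpose.matrix_mul continuous_id) continuous_const
  have hC : IsCompact (Set.pi Set.univ fun _ : Fin r =>
      Set.pi Set.univ fun _ : Fin r => Set.Icc (-1:ℝ) 1) :=
    isCompact_univ_pi fun _ => isCompact_univ_pi fun _ => isCompact_Icc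
  have hsub : K ⊆ Set.pi Set.univ fun _ : Fin r =>
      Set.pi Set.univ fun _ : Fin r => Set.Icc (-1:ℝ) 1 := by
    intro H hH
    have hH' : Hᵀ * H = 1 := hH
    intro i _
    intro j _
    have h1 : ∑ k, H k j * H k j = 1 := by
      have h2 := congrFun (congrFun hH' j) j
      simpa [mul_apply, transpose_apply, one_apply] using h2
    have hle : H i j * H i j ≤ 1 := by
      rw [← h1]
      exact Finset.single_le_sum (f := fun k => H k j * H k j)
        (fun k _ => mul_self_nonneg _) (Finset.mem_univ i)
    constructor <;> nlinarith
  have hcomp : IsCompact K := hC.of_isClosed_subset hclosed hsub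
  have hne : K.Nonempty := ⟨1, by simp [hK]⟩
  have hcont : Continuous fun H : Matrix (Fin r) (Fin r) ℝ => trace (Hᵀ * M) :=
    Continuous.matrix_trace (continuous_id.matrix_transpose.matrix_mul continuous_const)
  obtain ⟨Q, hQK, hmax'⟩ := hcomp.exists_isMaxOn hne hcont.continuousOn
  have hmax : ∀ H ∈ K, trace (Hᵀ * M) ≤ trace (Qᵀ * M) := fun H hH => hmax' hH
  have hQ : Qᵀ * Q = 1 := hQK
  refine ⟨Q, hQ, fun R hR => ?_⟩
  have hQR : Q * R ∈ K := by
    show (Q * R)ᵀ * (Q * R) = 1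
    rw [transpose_mul, Matrix.mul_assoc, ← Matrix.mul_assoc Qᵀ Q R, hQ, Matrix.one_mul, hR]
  have h2 := hmax (Q * R) hQR
  rw [transpose_mul, Matrix.mul_assoc] at h2
  exact h2



lemma quadform_bound {n r : ℕ} (hr1 : r - 1 < r) (X : Matrix (Fin n) (Fin r) ℝ)
    (u : Fin r → ℝ) :
    sval X ⟨r - 1, hr1⟩ ^ 2 * (u ⬝ᵥ u) ≤ u ⬝ᵥ (Xᵀ * X) *ᵥ u := by
  classical
  have hct : Xᴴ = Xᵀ := Matrix.conjTranspose_eq_transpose_of_trivial X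
  rw [← hct]
  set hA := Matrix.isHermitian_transpose_mul_self X with hAdef
  have hr0 : 0 < r := by omega
  have hrev : (Fin.rev ⟨r - 1, hr1⟩ : Fin r) = ⟨0, hr0⟩ := by
    apply Fin.ext
    simp only [Fin.val_rev]
    omega
  obtain ⟨ev, hev⟩ : ∃ ev, ev = hA.eigenvalues := ⟨_, rfl⟩
  have hnn : ∀ i, 0 ≤ ev i := fun i => hev ▸
    (Matrix.posSemidef_conjTranspose_mul_self X).eigenvalues_nonneg i
  have hσ2 : sval X ⟨r - 1, hr1⟩ ^ 2
      = ev (Tuple.sort ev ⟨0, hr0⟩) := by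
    simp only [sval, hrev, ← hev]
    exact Real.sq_sqrt (hnn _)
  have hmin : ∀ i, sval X ⟨r - 1, hr1⟩ ^ 2 ≤ ev i := by
    intro i
    rw [hσ2]
    obtain ⟨k, hk⟩ : ∃ k, Tuple.sort ev k = i :=
      ⟨(Tuple.sort ev).symm i, Equiv.apply_symm_apply _ _⟩
    rw [← hk]
    have hle : (⟨0, hr0⟩ : Fin r) ≤ k := by simp [Fin.le_def]
    simpa [Function.comp] using Tuple.monotone_sort ev hle
  set V : Matrix (Fin r) (Fin r) ℝ := ↑(hA.eigenvectorUnitary) with hV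
  have hV2 : V * star V = 1 := Matrix.mem_unitaryGroup_iff.mp (hA.eigenvectorUnitary).2
  have hsp : Xᴴ * X = V * Matrix.diagonal ev * star V := by
    have h := hA.spectral_theorem
    rw [RCLike.ofReal_real_eq_id, Function.id_comp, ← hev] at h
    exact h
  set w : Fin r → ℝ := star V *ᵥ u with hw
  have hsVt : star V = Vᵀ := by
    rw [Matrix.star_eq_conjTranspose, Matrix.conjTranspose_eq_transpose_of_trivial]
  have huv : u ᵥ* V = w := by
    rw [hw, hsVt, Matrix.mulVec_transpose]
  have hqf : u ⬝ᵥ (Xᴴ * X) *ᵥ u = ∑ i, ev i * (w i * w i) := by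
    rw [hsp, ← Matrix.mulVec_mulVec, ← Matrix.mulVec_mulVec, Matrix.dotProduct_mulVec u, huv]
    simp only [dotProduct, Matrix.mulVec_diagonal]
    exact Finset.sum_congr rfl fun i _ => by ring
  have hnorm : u ⬝ᵥ u = ∑ i, w i * w i := by
    have h1 : u ⬝ᵥ u = u ⬝ᵥ ((V * star V) *ᵥ u) := by rw [hV2, Matrix.one_mulVec]
    rw [h1, ← Matrix.mulVec_mulVec, Matrix.dotProduct_mulVec u, huv]
    rfl
  rw [hqf, hnorm, Finset.mul_sum]
  apply Finset.sum_le_sum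
  intro i _
  exact mul_le_mul_of_nonneg_right (hmin i) (mul_self_nonneg _)



variable {n r : ℕ}

lemma frobNorm_sq {p q : ℕ} (A : Matrix (Fin p) (Fin q) ℝ) :
    frobNorm A ^ 2 = trace (Aᵀ * A) := by
  rw [frobNorm, Real.sq_sqrt (by positivity)]
  simp only [trace, diag_apply, mul_apply, transpose_apply]
  rw [Finset.sum_comm]
  exact Finset.sum_congr rfl fun i _ => Finset.sum_congr rfl fun j _ => by ring

lemma frobNorm_nonneg {p q : ℕ} (A : Matrix (Fin p) (Fin q) ℝ) : 0 ≤ frobNorm A :=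
  Real.sqrt_nonneg _

lemma tr4 (A B C D : Matrix (Fin n) (Fin r) ℝ) :
    trace (A * Bᵀ * (C * Dᵀ)) = trace ((Dᵀ * A) * (Bᵀ * C)) := by
  rw [← Matrix.mul_assoc, Matrix.trace_mul_cycle]
  simp only [Matrix.mul_assoc]

lemma trace_gram_mul (B : Matrix (Fin n) (Fin r) ℝ) (W : Matrix (Fin r) (Fin r) ℝ) :
    trace (Bᵀ * B * W) = ∑ i, (fun j => B i j) ⬝ᵥ (W *ᵥ fun j => B i j) := by
  rw [← Matrix.trace_mul_cycle B W Bᵀ]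
  simp only [trace, diag_apply, mul_apply, transpose_apply, dotProduct, mulVec,
    Finset.sum_mul, Finset.mul_sum]
  refine Finset.sum_congr rfl fun i _ => ?_
  rw [Finset.sum_comm]
  exact Finset.sum_congr rfl fun a _ => Finset.sum_congr rfl fun k _ => by ring

lemma main_aux (n r : ℕ) (hr : 0 < r) (hr1 : r - 1 < r)
    (U X : Matrix (Fin n) (Fin r) ℝ)
    (hσ : 0 < sval X ⟨r - 1, hr1⟩) :
    distF U X ^ 2 ≤
      frobNorm (U * Uᵀ - X * Xᵀ) ^ 2 /
        (2 * (Real.sqrt 2 - 1) * sval X ⟨r - 1, hr1⟩ ^ 2) := by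
  classical
  obtain ⟨Q, hQ, hmaxQ⟩ := exists_best r (Uᵀ * X)
  set σ : ℝ := sval X ⟨r - 1, hr1⟩ with hσd
  set W : Matrix (Fin r) (Fin r) ℝ := Qᵀ * (Uᵀ * X) with hWd
  have hWsym : Wᵀ = W := symm_of_max W hmaxQ
  have hWpsd : ∀ u, 0 ≤ u ⬝ᵥ W *ᵥ u := psd_of_max W hmaxQ
  set Δ : Matrix (Fin n) (Fin r) ℝ := U * Q - X with hΔd
  set A : Matrix (Fin r) (Fin r) ℝ := Δᵀ * Δ with hAd
  set S : Matrix (Fin r) (Fin r) ℝ := Δᵀ * X with hSd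
  have hSW : S = W - Xᵀ * X := by
    rw [hSd, hΔd, hWd, transpose_sub, Matrix.sub_mul, transpose_mul, Matrix.mul_assoc]
  have hAsym : Aᵀ = A := by rw [hAd, transpose_mul, transpose_transpose]
  have hSsym : Sᵀ = S := by
    rw [hSW, transpose_sub, hWsym, transpose_mul, transpose_transpose]
  have hXtΔ : Xᵀ * Δ = S := by
    rw [← hSsym, hSd, transpose_mul, transpose_transpose]
  set c : ℝ := Real.sqrt 2 with hc
  have hc2 : c * c = 2 := Real.mul_self_sqrt (by norm_num)
  have hc0 : 0 ≤ c := Real.sqrt_nonneg 2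
  have hc1 : 1 < c := by nlinarith
  have hcle : c ≤ 2 := by nlinarith
  set D : Matrix (Fin n) (Fin n) ℝ := U * Uᵀ - X * Xᵀ with hDd
  have hQQt : Q * Qᵀ = 1 := mul_eq_one_comm.mp hQ
  have hDalt : D = Δ * Xᵀ + X * Δᵀ + Δ * Δᵀ := by
    have hXΔ : X + Δ = U * Q := by rw [hΔd]; abel
    have hUU : U * Uᵀ = (X + Δ) * (X + Δ)ᵀ := by
      rw [hXΔ, transpose_mul, ← Matrix.mul_assoc, Matrix.mul_assoc U Q Qᵀ, hQQt,
        Matrix.mul_one]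
    rw [hDd, hUU, transpose_add, Matrix.add_mul, Matrix.mul_add, Matrix.mul_add]
    abel
  have hDt : Dᵀ = D := by
    rw [hDd, transpose_sub, transpose_mul, transpose_mul, transpose_transpose,
      transpose_transpose]
  have hkey : trace (Dᵀ * D) = trace (A * A) + 2 * trace (S * S) + 4 * trace (A * S)
      + 2 * trace (A * (Xᵀ * X)) := by
    rw [hDt, hDalt]
    simp only [Matrix.add_mul, Matrix.mul_add, trace_add]
    rw [tr4 Δ X Δ X, tr4 Δ X X Δ, tr4 Δ X Δ Δ, tr4 X Δ Δ X, tr4 X Δ X Δ, tr4 X Δ Δ Δ,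
      tr4 Δ Δ Δ X, tr4 Δ Δ X Δ, tr4 Δ Δ Δ Δ]
    rw [hXtΔ]
    rw [← hSd, ← hAd]
    simp only [trace_mul_comm S A, trace_mul_comm (Xᵀ * X) A]
    ring
  have hTT : trace ((A + c • S)ᵀ * (A + c • S))
      = trace (A * A) + 2 * c * trace (A * S) + 2 * trace (S * S) := by
    rw [transpose_add, transpose_smul, hAsym, hSsym]
    simp only [Matrix.add_mul, Matrix.mul_add, Matrix.smul_mul, Matrix.mul_smul, trace_add,
      trace_smul, smul_eq_mul, smul_smul]
    rw [trace_mul_comm S A]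
    linear_combination trace (S * S) * hc2
  have hTT0 : 0 ≤ trace ((A + c • S)ᵀ * (A + c • S)) := by
    rw [← frobNorm_sq]
    positivity
  have hAW : 0 ≤ trace (A * W) := by
    rw [hAd, trace_gram_mul]
    exact Finset.sum_nonneg fun i _ => hWpsd _
  have hAX : σ ^ 2 * trace A ≤ trace (A * (Xᵀ * X)) := by
    have h1 : trace (A * (Xᵀ * X)) = ∑ i, (fun j => Δ i j) ⬝ᵥ ((Xᵀ * X) *ᵥ fun j => Δ i j) := by
      rw [hAd, trace_gram_mul]
    have h2 : trace A = ∑ i, (fun j => Δ i j) ⬝ᵥ (fun j => Δ i j) := by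
      have h3 := trace_gram_mul Δ (1 : Matrix (Fin r) (Fin r) ℝ)
      rw [Matrix.mul_one] at h3
      rw [hAd, h3]
      exact Finset.sum_congr rfl fun i _ => by rw [Matrix.one_mulVec]
    rw [h1, h2, Finset.mul_sum]
    exact Finset.sum_le_sum fun i _ => quadform_bound hr1 X _
  have hΔfrob : frobNorm Δ ^ 2 = trace A := by
    rw [frobNorm_sq, ← hAd]
  have hdist_le : distF U X ≤ frobNorm Δ := by
    have hmem : frobNorm Δ ∈ (fun H => frobNorm (U * H - X)) ''
        {H : Matrix (Fin r) (Fin r) ℝ | Hᵀ * H = 1} := by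
      refine ⟨Q, hQ, ?_⟩
      show frobNorm (U * Q - X) = frobNorm Δ
      rw [hΔd]
    apply csInf_le _ hmem
    refine ⟨0, fun x hx => ?_⟩
    obtain ⟨H, _, rfl⟩ := hx
    exact frobNorm_nonneg _
  have hdist0 : 0 ≤ distF U X := by
    apply le_csInf
    · exact ⟨frobNorm (U * 1 - X), ⟨1, by simp, rfl⟩⟩
    · rintro b ⟨H, _, rfl⟩
      exact frobNorm_nonneg _
  have hdsq : distF U X ^ 2 ≤ trace A := by
    calc distF U X ^ 2 ≤ frobNorm Δ ^ 2 := pow_le_pow_left₀ hdist0 hdist_le 2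
      _ = trace A := hΔfrob
  have hAS : trace (A * S) = trace (A * W) - trace (A * (Xᵀ * X)) := by
    rw [hSW, Matrix.mul_sub, trace_sub]
  have hmain : (2 * c - 2) * (σ ^ 2 * trace A) ≤ trace (Dᵀ * D) := by
    have e1 : trace (Dᵀ * D) = trace ((A + c • S)ᵀ * (A + c • S))
        + (4 - 2 * c) * trace (A * S) + 2 * trace (A * (Xᵀ * X)) := by
      rw [hkey, hTT]; ring
    have p1 : (4 - 2 * c) * (0 - trace (A * (Xᵀ * X)))
        ≤ (4 - 2 * c) * (trace (A * W) - trace (A * (Xᵀ * X))) := by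
      apply mul_le_mul_of_nonneg_left _ (by linarith)
      linarith [hAW]
    have p2 : (2 * c - 2) * (σ ^ 2 * trace A) ≤ (2 * c - 2) * trace (A * (Xᵀ * X)) :=
      mul_le_mul_of_nonneg_left hAX (by linarith)
    rw [e1, hAS]
    nlinarith [hTT0, p1, p2]
  have hden : 0 < 2 * (c - 1) * σ ^ 2 := by
    have hσ' : 0 < σ := hσ
    have h1 : (0:ℝ) < 2 * (c - 1) := by linarith
    exact mul_pos h1 (pow_pos hσ' 2)
  rw [le_div_iff₀ hden, frobNorm_sq]
  have hfin : distF U X ^ 2 * (2 * (c - 1) * σ ^ 2) ≤ trace A * (2 * (c - 1) * σ ^ 2) :=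
    mul_le_mul_of_nonneg_right hdsq hden.le
  have heq : trace A * (2 * (c - 1) * σ ^ 2) = (2 * c - 2) * (σ ^ 2 * trace A) := by ring
  linarith [hmain, hfin, heq ▸ hfin]

end DistProof

/-- **Controlling the factor distance by the matrix distance.**
For any `U, X ∈ ℝ^{n×r}` with `σ_r(X) > 0` (full column rank),
`dist²(U, X) ≤ ‖UUᵀ − XXᵀ‖_F² / (2(√2 − 1) σ_r(X)²)`. -/
theorem dist_factor_le_dist_matrix
    (n r : ℕ) (hr : 0 < r)
    (U X : Matrix (Fin n) (Fin r) ℝ)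
    (hσ : 0 < sval X ⟨r - 1, by omega⟩) :
    distF U X ^ 2 ≤
      frobNorm (U * Uᵀ - X * Xᵀ) ^ 2 /
        (2 * (Real.sqrt 2 - 1) * sval X ⟨r - 1, by omega⟩ ^ 2) := by
  exact DistProof.main_aux n r hr (by omega) U X hσ
end

section
/- Let A₁, …, A_m ∈ ℝⁿˣⁿ and let M⋆ ∈ ℝⁿˣⁿ be positive semidefinite. Define the over-parameterized loss f_op(X) = (1/m)·Σᵢ (⟨Aᵢ, XXᵀ⟩ − ⟨Aᵢ, M⋆⟩)² for X ∈ ℝⁿˣⁿ. Suppose the feasibility set {M ∈ ℝⁿˣⁿ : M ⪰ 0 and ⟨Aᵢ, M⟩ = ⟨Aᵢ, M⋆⟩ for all 1 ≤ i ≤ m} equals the singleton {M⋆}. Then every local minimum X of f_op satisfies XXᵀ = M⋆. -/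
open Matrix

/-- The trace inner product `⟨X, Y⟩ = Tr(XᵀY)` of two real matrices. -/
def mip {p q : ℕ} (A B : Matrix (Fin p) (Fin q) ℝ) : ℝ :=
  Matrix.trace (Aᵀ * B)

open Filter Topology in
/-- If a quartic polynomial with no constant term is nonnegative near `0`, then its linear
coefficient vanishes and its quadratic coefficient is nonnegative. -/
lemma poly_coeffs (a b c d δ : ℝ) (hδ : 0 < δ)
    (h : ∀ t : ℝ, |t| ≤ δ → 0 ≤ a*t + b*t^2 + c*t^3 + d*t^4) :
    a = 0 ∧ 0 ≤ b := by
  have cont : Filter.Tendsto (fun t : ℝ => a + b*t + c*t^2 + d*t^3) (𝓝 0)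
      (𝓝 a) := by
    have : Continuous (fun t : ℝ => a + b*t + c*t^2 + d*t^3) := by fun_prop
    simpa using this.tendsto 0
  have hright : ∀ᶠ t in 𝓝[>] (0:ℝ), 0 ≤ a + b*t + c*t^2 + d*t^3 := by
    filter_upwards [Ioo_mem_nhdsGT_of_mem (show (0:ℝ) ∈ Set.Ico 0 δ from ⟨le_refl 0, hδ⟩)]
      with t ht
    obtain ⟨ht0, htδ⟩ := ht
    have h0 := h t (by rw [abs_of_pos ht0]; exact htδ.le)
    by_contra hE
    push_neg at hE
    nlinarith [mul_pos (neg_pos.2 hE) ht0]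
  have hleft : ∀ᶠ t in 𝓝[<] (0:ℝ), a + b*t + c*t^2 + d*t^3 ≤ 0 := by
    filter_upwards [Ioo_mem_nhdsLT_of_mem
      (show (0:ℝ) ∈ Set.Ioc (-δ) 0 from ⟨by linarith, le_refl 0⟩)] with t ht
    obtain ⟨htδ, ht0⟩ := ht
    have h0 := h t (by rw [abs_of_neg ht0]; linarith)
    by_contra hE
    push_neg at hE
    nlinarith [mul_pos hE (neg_pos.2 ht0)]
  have ha1 : 0 ≤ a := ge_of_tendsto (cont.mono_left nhdsWithin_le_nhds) hright
  have ha2 : a ≤ 0 := le_of_tendsto (cont.mono_left nhdsWithin_le_nhds) hleft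
  have ha : a = 0 := le_antisymm ha2 ha1
  subst ha
  refine ⟨rfl, ?_⟩
  have cont2 : Filter.Tendsto (fun t : ℝ => b + c*t + d*t^2) (𝓝 0) (𝓝 b) := by
    have : Continuous (fun t : ℝ => b + c*t + d*t^2) := by fun_prop
    simpa using this.tendsto 0
  have hright2 : ∀ᶠ t in 𝓝[>] (0:ℝ), 0 ≤ b + c*t + d*t^2 := by
    filter_upwards [Ioo_mem_nhdsGT_of_mem (show (0:ℝ) ∈ Set.Ico 0 δ from ⟨le_refl 0, hδ⟩)]
      with t ht
    obtain ⟨ht0, htδ⟩ := ht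
    have h0 := h t (by rw [abs_of_pos ht0]; exact htδ.le)
    by_contra hE
    push_neg at hE
    nlinarith [mul_pos (mul_pos (neg_pos.2 hE) ht0) ht0]
  exact ge_of_tendsto (cont2.mono_left nhdsWithin_le_nhds) hright2

/-- First- and second-order conditions extracted from a local-minimum inequality. -/
lemma sum_quad {m : ℕ} (r s c : Fin m → ℝ) (δ : ℝ) (hδ : 0 < δ)
    (h : ∀ t : ℝ, |t| ≤ δ → ∑ i, (r i)^2 ≤ ∑ i, (r i + t * s i + t^2 * c i)^2) :
    (∑ i, r i * s i) = 0 ∧ 0 ≤ ∑ i, ((s i)^2 + 2 * (r i * c i)) := by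
  have key := poly_coeffs (2 * ∑ i, r i * s i) (∑ i, ((s i)^2 + 2 * (r i * c i)))
      (2 * ∑ i, s i * c i) (∑ i, (c i)^2) δ hδ ?_
  · exact ⟨by linarith [key.1], key.2⟩
  · intro t ht
    have h0 := h t ht
    have e : ∀ i ∈ Finset.univ, (r i + t * s i + t^2 * c i)^2
        = (r i)^2 + ((2*(r i * s i))*t + ((s i)^2 + 2*(r i * c i))*t^2
            + (2*(s i * c i))*t^3 + ((c i)^2)*t^4) := by
      intro i _
      ring
    rw [Finset.sum_congr rfl e, Finset.sum_add_distrib] at h0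
    have h1 : 0 ≤ ∑ i, ((2*(r i * s i))*t + ((s i)^2 + 2*(r i * c i))*t^2
        + (2*(s i * c i))*t^3 + ((c i)^2)*t^4) := by linarith
    have h2 : ∑ i, ((2*(r i * s i))*t + ((s i)^2 + 2*(r i * c i))*t^2
        + (2*(s i * c i))*t^3 + ((c i)^2)*t^4)
        = (2 * ∑ i, r i * s i)*t + (∑ i, ((s i)^2 + 2*(r i * c i)))*t^2
            + (2 * ∑ i, s i * c i)*t^3 + (∑ i, (c i)^2)*t^4 := by
      simp only [Finset.sum_add_distrib, ← Finset.sum_mul, Finset.mul_sum]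
    linarith [h2 ▸ h1]

lemma mip_sum {p q : ℕ} (A M : Matrix (Fin p) (Fin q) ℝ) :
    mip A M = ∑ i, ∑ j, A i j * M i j := by
  simp only [mip, Matrix.trace, Matrix.diag, Matrix.mul_apply, Matrix.transpose_apply]
  rw [Finset.sum_comm]

lemma mip_add {p q : ℕ} (A M N : Matrix (Fin p) (Fin q) ℝ) :
    mip A (M + N) = mip A M + mip A N := by
  simp [mip, Matrix.mul_add]

lemma mip_sub {p q : ℕ} (A M N : Matrix (Fin p) (Fin q) ℝ) :
    mip A (M - N) = mip A M - mip A N := by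
  simp [mip, Matrix.mul_sub]

lemma mip_smul {p q : ℕ} (A : Matrix (Fin p) (Fin q) ℝ) (t : ℝ) (M : Matrix (Fin p) (Fin q) ℝ) :
    mip A (t • M) = t * mip A M := by
  simp [mip, Matrix.mul_smul]

lemma mip_zero {p q : ℕ} (A : Matrix (Fin p) (Fin q) ℝ) : mip A 0 = 0 := by
  simp [mip]

lemma frobNorm_nonneg {p q : ℕ} (A : Matrix (Fin p) (Fin q) ℝ) : 0 ≤ frobNorm A :=
  Real.sqrt_nonneg _

lemma frobNorm_smul {p q : ℕ} (t : ℝ) (A : Matrix (Fin p) (Fin q) ℝ) :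
    frobNorm (t • A) = |t| * frobNorm A := by
  unfold frobNorm
  rw [← Real.sqrt_sq_eq_abs, ← Real.sqrt_mul (sq_nonneg t)]
  congr 1
  simp [Matrix.smul_apply, smul_eq_mul, mul_pow, Finset.mul_sum]

lemma expand_sq {p : ℕ} (X D : Matrix (Fin p) (Fin p) ℝ) (t : ℝ) :
    (X + t • D) * (X + t • D)ᵀ
      = X * Xᵀ + t • (D * Xᵀ + X * Dᵀ) + (t^2) • (D * Dᵀ) := by
  ext i j
  simp only [Matrix.add_apply, Matrix.mul_apply, Matrix.smul_apply, Matrix.transpose_apply,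
    smul_eq_mul, Finset.mul_sum, ← Finset.sum_add_distrib]
  apply Finset.sum_congr rfl
  intros
  ring

/-- **No spurious local minima for over-parameterized matrix sensing.**
Let `f_op(X) = (1/m) ∑ᵢ (⟨Aᵢ, XXᵀ⟩ − ⟨Aᵢ, M⋆⟩)²` for `X ∈ ℝ^{n×n}` and `M⋆ ⪰ 0`. If the
feasibility set `{M ⪰ 0 : ⟨Aᵢ, M⟩ = ⟨Aᵢ, M⋆⟩ ∀i}` is the singleton `{M⋆}`, then every local
minimum `X` of `f_op` satisfies `XXᵀ = M⋆`. -/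
theorem over_parameterized_sensing_no_spurious_local_minima
    (n m : ℕ)
    (A : Fin m → Matrix (Fin n) (Fin n) ℝ)
    (Mstar : Matrix (Fin n) (Fin n) ℝ)
    (hMstar : Mstar.PosSemidef)
    (hsingleton : {M : Matrix (Fin n) (Fin n) ℝ |
      M.PosSemidef ∧ ∀ i, mip (A i) M = mip (A i) Mstar} = {Mstar})
    (X : Matrix (Fin n) (Fin n) ℝ)
    (hlocal : ∃ ε > (0 : ℝ), ∀ X' : Matrix (Fin n) (Fin n) ℝ, frobNorm (X' - X) ≤ ε →
      (1 / (m : ℝ)) * ∑ i, (mip (A i) (X * Xᵀ) - mip (A i) Mstar) ^ 2 ≤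
      (1 / (m : ℝ)) * ∑ i, (mip (A i) (X' * X'ᵀ) - mip (A i) Mstar) ^ 2) :
    X * Xᵀ = Mstar := by
  obtain ⟨ε, hε, hloc⟩ := hlocal
  have hri : ∀ i, mip (A i) (X * Xᵀ) = mip (A i) Mstar := by
    rcases Nat.eq_zero_or_pos m with hm | hm
    · subst hm
      intro i
      exact i.elim0
    · -- the residuals
      have hmR : (0:ℝ) < (m:ℝ) := by exact_mod_cast hm
      -- master lemma: first- and second-order conditions for every direction D
      have master : ∀ D : Matrix (Fin n) (Fin n) ℝ,
          (∑ i, (mip (A i) (X * Xᵀ) - mip (A i) Mstar) * mip (A i) (D * Xᵀ + X * Dᵀ)) = 0 ∧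
          0 ≤ ∑ i, ((mip (A i) (D * Xᵀ + X * Dᵀ))^2
              + 2 * ((mip (A i) (X * Xᵀ) - mip (A i) Mstar) * mip (A i) (D * Dᵀ))) := by
        intro D
        have hfro1 : (0:ℝ) < frobNorm D + 1 := by linarith [frobNorm_nonneg D]
        apply sum_quad (fun i => mip (A i) (X * Xᵀ) - mip (A i) Mstar)
          (fun i => mip (A i) (D * Xᵀ + X * Dᵀ)) (fun i => mip (A i) (D * Dᵀ))
          (ε / (frobNorm D + 1)) (div_pos hε hfro1)
        intro t ht
        have hfro : frobNorm ((X + t • D) - X) ≤ ε := by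
          rw [add_sub_cancel_left, frobNorm_smul]
          calc |t| * frobNorm D ≤ (ε / (frobNorm D + 1)) * (frobNorm D + 1) := by
                apply mul_le_mul ht (by linarith) (frobNorm_nonneg D)
                  (le_of_lt (div_pos hε hfro1))
            _ = ε := div_mul_cancel₀ _ (ne_of_gt hfro1)
        have h2 := hloc (X + t • D) hfro
        have h3 : ∑ i, (mip (A i) (X * Xᵀ) - mip (A i) Mstar) ^ 2
            ≤ ∑ i, (mip (A i) ((X + t • D) * (X + t • D)ᵀ) - mip (A i) Mstar) ^ 2 := by
          have hm' : (0:ℝ) < 1 / (m:ℝ) := by positivity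
          exact le_of_mul_le_mul_left (by simpa using h2) hm'
        have e : ∀ i, mip (A i) ((X + t • D) * (X + t • D)ᵀ) - mip (A i) Mstar
            = (mip (A i) (X * Xᵀ) - mip (A i) Mstar)
              + t * mip (A i) (D * Xᵀ + X * Dᵀ) + t^2 * mip (A i) (D * Dᵀ) := by
          intro i
          rw [expand_sq, mip_add, mip_add, mip_smul, mip_smul]
          ring
        simpa only [e] using h3
      by_cases hdet : IsUnit X.det
      · -- invertible case: move towards Mstar
        have hXt : IsUnit (Xᵀ).det := by rwa [det_transpose]
        have hHsym : (Mstar - X * Xᵀ)ᵀ = Mstar - X * Xᵀ := by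
          rw [transpose_sub, transpose_mul, transpose_transpose,
            ← conjTranspose_eq_transpose_of_trivial Mstar, hMstar.1]
        set D := (2⁻¹ : ℝ) • ((Mstar - X * Xᵀ) * (Xᵀ)⁻¹) with hD
        have hDX : D * Xᵀ = (2⁻¹ : ℝ) • (Mstar - X * Xᵀ) := by
          rw [hD, Matrix.smul_mul, Matrix.mul_assoc, Matrix.nonsing_inv_mul _ hXt,
            Matrix.mul_one]
        have hXD : X * Dᵀ = (2⁻¹ : ℝ) • (Mstar - X * Xᵀ) := by
          have h4 : X * Dᵀ = (D * Xᵀ)ᵀ := by rw [transpose_mul, transpose_transpose]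
          rw [h4, hDX, transpose_smul, hHsym]
        have hsumD : D * Xᵀ + X * Dᵀ = Mstar - X * Xᵀ := by
          rw [hDX, hXD, ← add_smul]
          norm_num
        have h1 := (master D).1
        rw [hsumD] at h1
        have e2 : ∀ i ∈ Finset.univ,
            (mip (A i) (X * Xᵀ) - mip (A i) Mstar) * mip (A i) (Mstar - X * Xᵀ)
            = -(mip (A i) (X * Xᵀ) - mip (A i) Mstar)^2 := by
          intro i _
          rw [mip_sub]
          ring
        rw [Finset.sum_congr rfl e2, Finset.sum_neg_distrib, neg_eq_zero] at h1
        intro i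
        have h5 := (Finset.sum_eq_zero_iff_of_nonneg
          (fun i _ => sq_nonneg (mip (A i) (X * Xᵀ) - mip (A i) Mstar))).mp h1 i
          (Finset.mem_univ i)
        have h6 := (pow_eq_zero_iff two_ne_zero).mp h5
        linarith [h6]
      · -- singular case
        have hdet0 : X.det = 0 := not_not.mp (by simpa [isUnit_iff_ne_zero] using hdet)
        obtain ⟨w, hw0, hww⟩ := (Matrix.exists_mulVec_eq_zero_iff).mpr hdet0
        -- first-order condition in the scaling direction D = X
        have h1 := (master X).1
        have e1 : ∀ i ∈ Finset.univ,
            (mip (A i) (X * Xᵀ) - mip (A i) Mstar) * mip (A i) (X * Xᵀ + X * Xᵀ)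
            = 2 * ((mip (A i) (X * Xᵀ) - mip (A i) Mstar) * mip (A i) (X * Xᵀ)) := by
          intro i _
          rw [mip_add]
          ring
        rw [Finset.sum_congr rfl e1, ← Finset.mul_sum] at h1
        have hfirst : ∑ i, (mip (A i) (X * Xᵀ) - mip (A i) Mstar) * mip (A i) (X * Xᵀ) = 0 := by
          linarith
        -- second-order condition along rank-one kernel directions
        have κpos : 0 < ∑ k, (w k)^2 := by
          obtain ⟨k, hk⟩ := Function.ne_iff.mp hw0
          exact Finset.sum_pos' (fun _ _ => sq_nonneg _)
            ⟨k, Finset.mem_univ k, sq_pos_of_ne_zero hk⟩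
        have hsec : ∀ v : Fin n → ℝ,
            0 ≤ ∑ i, (mip (A i) (X * Xᵀ) - mip (A i) Mstar) * mip (A i) (vecMulVec v v) := by
          intro v
          have hDX : vecMulVec v w * Xᵀ = 0 := by
            ext i j
            simp only [Matrix.mul_apply, Matrix.vecMulVec_apply, Matrix.transpose_apply,
              Matrix.zero_apply]
            have e4 : ∀ k ∈ Finset.univ, v i * w k * X j k = v i * (X j k * w k) := by
              intro k _
              ring
            rw [Finset.sum_congr rfl e4, ← Finset.mul_sum]
            have e5 := congrFun hww j
            simp only [Matrix.mulVec, dotProduct, Pi.zero_apply] at e5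
            rw [e5, mul_zero]
          have hXD : X * (vecMulVec v w)ᵀ = 0 := by
            have h4 : X * (vecMulVec v w)ᵀ = (vecMulVec v w * Xᵀ)ᵀ := by
              rw [transpose_mul, transpose_transpose]
            rw [h4, hDX, transpose_zero]
          have hDD : vecMulVec v w * (vecMulVec v w)ᵀ = (∑ k, (w k)^2) • vecMulVec v v := by
            ext i j
            simp only [Matrix.mul_apply, Matrix.vecMulVec_apply, Matrix.transpose_apply,
              Matrix.smul_apply, smul_eq_mul]
            have e6 : ∀ k ∈ Finset.univ, v i * w k * (v j * w k) = (w k)^2 * (v i * v j) := by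
              intro k _
              ring
            rw [Finset.sum_congr rfl e6, ← Finset.sum_mul]
          have h2 := (master (vecMulVec v w)).2
          rw [hDX, hXD, hDD] at h2
          have e3 : ∀ i ∈ Finset.univ, (mip (A i) ((0:Matrix (Fin n) (Fin n) ℝ) + 0))^2
              + 2 * ((mip (A i) (X * Xᵀ) - mip (A i) Mstar)
                * mip (A i) ((∑ k, (w k)^2) • vecMulVec v v))
              = (2 * ∑ k, (w k)^2)
                * ((mip (A i) (X * Xᵀ) - mip (A i) Mstar) * mip (A i) (vecMulVec v v)) := by
            intro i _
            rw [add_zero, mip_zero, mip_smul]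
            ring
          rw [Finset.sum_congr rfl e3, ← Finset.mul_sum] at h2
          nlinarith [h2, κpos]
        -- Mstar = Bᵀ * B, so the second-order conditions give nonnegativity at Mstar
        obtain ⟨B, hB⟩ : ∃ B : Matrix (Fin n) (Fin n) ℝ, Mstar = Bᴴ * B := by
          open scoped MatrixOrder in
          have h0 : (0 : Matrix (Fin n) (Fin n) ℝ) ≤ Mstar := Matrix.nonneg_iff_posSemidef.mpr hMstar
          open scoped MatrixOrder in
          exact ⟨CFC.sqrt Mstar, by
            rw [show (CFC.sqrt Mstar)ᴴ = CFC.sqrt Mstar from (CFC.sqrt_nonneg Mstar).isSelfAdjoint.star_eq,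
              CFC.sqrt_mul_sqrt_self Mstar h0]⟩
        rw [conjTranspose_eq_transpose_of_trivial] at hB
        have hMdecomp : ∀ i, mip (A i) Mstar = ∑ c0, mip (A i) (vecMulVec (B c0) (B c0)) := by
          intro i
          rw [hB]
          simp only [mip_sum, Matrix.mul_apply, Matrix.transpose_apply, Matrix.vecMulVec_apply,
            Finset.mul_sum]
          have e9 : ∀ a : Fin n, (∑ b, ∑ c0, A i a b * (B c0 a * B c0 b))
              = ∑ c0, ∑ b, A i a b * (B c0 a * B c0 b) := fun a => Finset.sum_comm
          rw [Finset.sum_congr rfl (fun a _ => e9 a)]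
          exact Finset.sum_comm
        have hsecond : 0 ≤ ∑ i, (mip (A i) (X * Xᵀ) - mip (A i) Mstar) * mip (A i) Mstar := by
          have e7 : ∀ i ∈ Finset.univ, (mip (A i) (X * Xᵀ) - mip (A i) Mstar) * mip (A i) Mstar
              = ∑ c0, (mip (A i) (X * Xᵀ) - mip (A i) Mstar)
                  * mip (A i) (vecMulVec (B c0) (B c0)) := by
            intro i _
            rw [hMdecomp i, Finset.mul_sum]
          rw [Finset.sum_congr rfl e7, Finset.sum_comm]
          exact Finset.sum_nonneg (fun c0 _ => hsec (B c0))
        -- combine: ∑ rᵢ² ≤ 0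
        have hsq : ∑ i, (mip (A i) (X * Xᵀ) - mip (A i) Mstar)^2 ≤ 0 := by
          have e8 : ∀ i ∈ Finset.univ, (mip (A i) (X * Xᵀ) - mip (A i) Mstar)^2
              = (mip (A i) (X * Xᵀ) - mip (A i) Mstar) * mip (A i) (X * Xᵀ)
                - (mip (A i) (X * Xᵀ) - mip (A i) Mstar) * mip (A i) Mstar := by
            intro i _
            ring
          rw [Finset.sum_congr rfl e8, Finset.sum_sub_distrib, hfirst]
          linarith
        have hsq0 : ∑ i, (mip (A i) (X * Xᵀ) - mip (A i) Mstar)^2 = 0 :=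
          le_antisymm hsq (Finset.sum_nonneg fun i _ => sq_nonneg _)
        intro i
        have h5 := (Finset.sum_eq_zero_iff_of_nonneg
          (fun i _ => sq_nonneg (mip (A i) (X * Xᵀ) - mip (A i) Mstar))).mp hsq0 i
          (Finset.mem_univ i)
        have h6 := (pow_eq_zero_iff two_ne_zero).mp h5
        linarith [h6]
  have hpsd : (X * Xᵀ).PosSemidef := by
    have := Matrix.posSemidef_self_mul_conjTranspose X
    rwa [conjTranspose_eq_transpose_of_trivial] at this
  have hmem : X * Xᵀ ∈ {M : Matrix (Fin n) (Fin n) ℝ |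
      M.PosSemidef ∧ ∀ i, mip (A i) M = mip (A i) Mstar} := ⟨hpsd, hri⟩
  rw [hsingleton] at hmem
  exact hmem
end
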